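/- Kantorovich decomposition: let μ, ν be probability distributions on a finite set A with 1-bounded pseudometric d, t₁ ∈ supp(μ) with μ(t₁) ∈ (0,1), and let ω be an optimal coupling for K_d(μ,ν). With μ₁ = δ_{t₁}, μ₂(x) = μ(x)/(1−μ(t₁)) for x ≠ t₁ (and 0 at t₁), ν₁(y) = ω(t₁,y)/μ(t₁), ν₂(y) = (ν(y) − ω(t₁,y))/(1−μ(t₁)), it holds that K_d(μ,ν) = μ(t₁)·K_d(μ₁,ν₁) + (1−μ(t₁))·K_d(μ₂,ν₂). -/

import Mathlib

open scoped BigOperators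

def IsPMF {A : Type*} [Fintype A] (μ : A → ℝ) : Prop :=
  (∀ x, 0 ≤ μ x) ∧ ∑ x, μ x = 1

def IsCoupling {A : Type*} [Fintype A] (μ ν : A → ℝ) (ω : A × A → ℝ) : Prop :=
  IsPMF ω ∧ (∀ x, ∑ y, ω (x, y) = μ x) ∧ (∀ y, ∑ x, ω (x, y) = ν y)

def IsPseudo1 {A : Type*} (d : A → A → ℝ) : Prop :=
  (∀ x, d x x = 0) ∧ (∀ x y, d x y = d y x) ∧ (∀ x y z, d x z ≤ d x y + d y z) ∧
  (∀ x y, 0 ≤ d x y) ∧ (∀ x y, d x y ≤ 1)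

noncomputable def kant {A : Type*} [Fintype A] (d : A → A → ℝ) (μ ν : A → ℝ) : ℝ :=
  sInf {r | ∃ ω, IsCoupling μ ν ω ∧ r = ∑ p : A × A, d p.1 p.2 * ω p}

lemma kant_bddBelow {A : Type*} [Fintype A] (d : A → A → ℝ) (hd : IsPseudo1 d) (μ ν : A → ℝ) :
    BddBelow {r | ∃ ω, IsCoupling μ ν ω ∧ r = ∑ p : A × A, d p.1 p.2 * ω p} := by
  refine ⟨0, fun r hr => ?_⟩
  obtain ⟨σ, hσ, rfl⟩ := hr
  exact Finset.sum_nonneg fun p _ => mul_nonneg (hd.2.2.2.1 _ _) (hσ.1.1 p)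

lemma kant_le {A : Type*} [Fintype A] (d : A → A → ℝ) (hd : IsPseudo1 d) (μ ν : A → ℝ)
    (σ : A × A → ℝ) (hσ : IsCoupling μ ν σ) :
    kant d μ ν ≤ ∑ p : A × A, d p.1 p.2 * σ p :=
  csInf_le (kant_bddBelow d hd μ ν) ⟨σ, hσ, rfl⟩

theorem kant_decomposition {A : Type*} [Fintype A] [DecidableEq A]
    (d : A → A → ℝ) (hd : IsPseudo1 d)
    (μ ν : A → ℝ) (ω : A × A → ℝ) (t1 : A)
    (hμ : IsPMF μ) (hν : IsPMF ν) (hω : IsCoupling μ ν ω)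
    (hopt : (∑ p : A × A, d p.1 p.2 * ω p) = kant d μ ν)
    (h0 : 0 < μ t1) (h1 : μ t1 < 1) :
    let μ1 : A → ℝ := fun x => if x = t1 then 1 else 0
    let μ2 : A → ℝ := fun x => if x = t1 then 0 else μ x / (1 - μ t1)
    let ν1 : A → ℝ := fun y => ω (t1, y) / μ t1
    let ν2 : A → ℝ := fun y => (ν y - ω (t1, y)) / (1 - μ t1)
    kant d μ ν = μ t1 * kant d μ1 ν1 + (1 - μ t1) * kant d μ2 ν2 := by
  intro μ1 μ2 ν1 ν2
  set a := μ t1 with ha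
  have hb : 0 < 1 - a := by linarith
  have ha0 : a ≠ 0 := ne_of_gt h0
  have hb0 : (1 : ℝ) - a ≠ 0 := ne_of_gt hb
  obtain ⟨⟨hωnn, hωsum⟩, hrow, hcol⟩ := hω
  -- row sums and basic facts
  have hωt1 : ∀ y, ω (t1, y) ≤ ν y := by
    intro y
    rw [← hcol y]
    exact Finset.single_le_sum (fun x _ => hωnn (x, y)) (Finset.mem_univ t1)
  -- the decomposed couplings
  set ω1 : A × A → ℝ := fun p => if p.1 = t1 then ω (t1, p.2) / a else 0 with hω1
  set ω2 : A × A → ℝ := fun p => if p.1 = t1 then 0 else ω p / (1 - a) with hω2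
  have hω1row : ∀ x, ∑ y, ω1 (x, y) = μ1 x := by
    intro x
    by_cases hx : x = t1 <;> simp [ω1, μ1, hx, ← Finset.sum_div, hrow t1, ha0, ← ha]
  have hω2row : ∀ x, ∑ y, ω2 (x, y) = μ2 x := by
    intro x
    by_cases hx : x = t1 <;> simp [ω2, μ2, hx, ← Finset.sum_div, hrow x, ← ha]
  have hc1 : IsCoupling μ1 ν1 ω1 := by
    refine ⟨⟨fun p => ?_, ?_⟩, hω1row, fun y => ?_⟩
    · by_cases hx : p.1 = t1 <;>
        simp [ω1, hx, div_nonneg (hωnn _) h0.le]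
    · rw [Fintype.sum_prod_type]
      simp only [hω1row]
      simp [μ1]
    · simp [ω1, ν1, ← ha]
  have hc2 : IsCoupling μ2 ν2 ω2 := by
    refine ⟨⟨fun p => ?_, ?_⟩, hω2row, fun y => ?_⟩
    · by_cases hx : p.1 = t1 <;>
        simp [ω2, hx, div_nonneg (hωnn _) hb.le]
    · rw [Fintype.sum_prod_type]
      simp only [hω2row]
      have : ∑ x, μ2 x = (∑ x, μ x - a) / (1 - a) := by
        have e : ∀ x, μ2 x = (μ x - if x = t1 then a else 0) / (1 - a) := by
          intro x; by_cases hx : x = t1 <;> simp [μ2, hx, ha]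
        rw [Finset.sum_congr rfl fun x _ => e x, ← Finset.sum_div,
          Finset.sum_sub_distrib, Finset.sum_ite_eq' Finset.univ t1 (fun _ => a)]
        simp
      rw [this, hμ.2]
      field_simp
    · have : ∑ x, ω2 (x, y) = (∑ x, ω (x, y) - ω (t1, y)) / (1 - a) := by
        have e : ∀ x, ω2 (x, y) = (ω (x, y) - if x = t1 then ω (t1, y) else 0) / (1 - a) := by
          intro x; by_cases hx : x = t1 <;> simp [ω2, hx]
        rw [Finset.sum_congr rfl fun x _ => e x, ← Finset.sum_div,
          Finset.sum_sub_distrib, Finset.sum_ite_eq' Finset.univ t1 (fun x => ω (t1, y))]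
        simp
      rw [this, hcol y]
  -- cost splitting for ω
  have hsplit : ∑ p : A × A, d p.1 p.2 * ω p
      = a * ∑ p : A × A, d p.1 p.2 * ω1 p + (1 - a) * ∑ p : A × A, d p.1 p.2 * ω2 p := by
    rw [Finset.mul_sum, Finset.mul_sum, ← Finset.sum_add_distrib]
    refine Finset.sum_congr rfl fun p _ => ?_
    obtain ⟨x, y⟩ := p
    by_cases hx : x = t1
    · subst hx; simp [ω1, ω2]; field_simp <;> ring
    · simp [ω1, ω2, hx]; field_simp <;> ring
  -- ≥ direction
  have hge : a * kant d μ1 ν1 + (1 - a) * kant d μ2 ν2 ≤ kant d μ ν := by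
    rw [← hopt, hsplit]
    have l1 := kant_le d hd μ1 ν1 ω1 hc1
    have l2 := kant_le d hd μ2 ν2 ω2 hc2
    nlinarith [l1, l2, h0, hb]
  -- ≤ direction
  have hcomb : ∀ σ1 σ2, IsCoupling μ1 ν1 σ1 → IsCoupling μ2 ν2 σ2 →
      kant d μ ν ≤ a * (∑ p : A × A, d p.1 p.2 * σ1 p) + (1 - a) * (∑ p : A × A, d p.1 p.2 * σ2 p) := by
    intro σ1 σ2 hσ1 hσ2
    set σ : A × A → ℝ := fun p => a * σ1 p + (1 - a) * σ2 p with hσdef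
    have hσc : IsCoupling μ ν σ := by
      refine ⟨⟨fun p => add_nonneg (mul_nonneg h0.le (hσ1.1.1 p)) (mul_nonneg hb.le (hσ2.1.1 p)), ?_⟩,
        fun x => ?_, fun y => ?_⟩
      · simp only [σ, Finset.sum_add_distrib, ← Finset.mul_sum, hσ1.1.2, hσ2.1.2]
        ring
      · simp only [σ, Finset.sum_add_distrib, ← Finset.mul_sum, hσ1.2.1 x, hσ2.2.1 x]
        by_cases hx : x = t1 <;> simp [μ1, μ2, hx, ← ha] <;> field_simp
      · simp only [σ, Finset.sum_add_distrib, ← Finset.mul_sum, hσ1.2.2 y, hσ2.2.2 y]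
        simp only [ν1, ν2, ← ha]
        field_simp
        ring
    have := kant_le d hd μ ν σ hσc
    calc kant d μ ν ≤ ∑ p : A × A, d p.1 p.2 * σ p := this
      _ = _ := by
          rw [Finset.mul_sum, Finset.mul_sum, ← Finset.sum_add_distrib]
          exact Finset.sum_congr rfl fun p _ => by simp [σ]; ring
  have hne1 : ({r | ∃ σ, IsCoupling μ1 ν1 σ ∧ r = ∑ p : A × A, d p.1 p.2 * σ p}).Nonempty :=
    ⟨_, ω1, hc1, rfl⟩
  have hne2 : ({r | ∃ σ, IsCoupling μ2 ν2 σ ∧ r = ∑ p : A × A, d p.1 p.2 * σ p}).Nonempty :=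
    ⟨_, ω2, hc2, rfl⟩
  have hle : kant d μ ν ≤ a * kant d μ1 ν1 + (1 - a) * kant d μ2 ν2 := by
    have step2 : ∀ r2 ∈ {r | ∃ σ, IsCoupling μ2 ν2 σ ∧ r = ∑ p : A × A, d p.1 p.2 * σ p},
        kant d μ ν ≤ a * kant d μ1 ν1 + (1 - a) * r2 := by
      rintro r2 ⟨σ2, hσ2, rfl⟩
      have h1' : (kant d μ ν - (1 - a) * (∑ p : A × A, d p.1 p.2 * σ2 p)) / a ≤ kant d μ1 ν1 := by
        apply le_csInf hne1
        rintro r1 ⟨σ1, hσ1, rfl⟩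
        rw [div_le_iff₀ h0]
        have := hcomb σ1 σ2 hσ1 hσ2
        nlinarith
      rw [div_le_iff₀ h0] at h1'
      nlinarith
    have h2' : (kant d μ ν - a * kant d μ1 ν1) / (1 - a) ≤ kant d μ2 ν2 := by
      apply le_csInf hne2
      rintro r2 hr2
      rw [div_le_iff₀ hb]
      have := step2 r2 hr2
      nlinarith
    rw [div_le_iff₀ hb] at h2'
    nlinarith
  linarith
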